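/- Let $\varphi \in \mathcal{S}(\mathbb{R}^n)$ with $\mathrm{supp}\,\varphi \subset [-3/4,3/4]^n$, and let $\alpha \in \mathbb{R}$. Then there is a constant $C>0$ such that for every $k\in\mathbb{Z}^n\setminus\{0\}$, every multi-index $\gamma$ with $|\gamma|\le [n/2]+1$, and every $\xi\neq 0$, we have $|\xi|^{|\gamma|}\,|\partial_\xi^\gamma\big(|k|^\alpha |\xi+k|^{-\alpha}\varphi(\xi)\big)| \le C$. -/

import Mathlib

open MeasureTheory Real SchwartzMap
open scoped ENNReal NNReal

noncomputable section

/-- Euclidean space `ℝⁿ`. -/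
abbrev E (n : ℕ) := EuclideanSpace ℝ (Fin n)

/-- The Fourier transform `f̂(ξ) = ∫ e^{-i ξ·x} f(x) dx`. -/
def ft (n : ℕ) (f : E n → ℂ) (ξ : E n) : ℂ :=
  ∫ x : E n, Complex.exp (-(Complex.I * ((inner ℝ x ξ : ℝ) : ℂ))) * f x

/-- The inverse Fourier transform `(2π)^{-n} ∫ e^{i x·ξ} f(ξ) dξ`. -/
def ftInv (n : ℕ) (f : E n → ℂ) (x : E n) : ℂ :=
  (((2 * Real.pi) ^ n)⁻¹ : ℝ) • ∫ ξ : E n, Complex.exp (Complex.I * ((inner ℝ x ξ : ℝ) : ℂ)) * f ξ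

/-- The fractional integral operator `I_α f = 𝓕⁻¹[|ξ|^{-α} 𝓕 f]`. -/
def Ifrac (n : ℕ) (α : ℝ) (f : E n → ℂ) : E n → ℂ :=
  ftInv n (fun ξ => ((‖ξ‖ ^ (-α) : ℝ) : ℂ) * ft n f ξ)

/-- `I_{α,β} = I_α + I_β`. -/
def Iab (n : ℕ) (α β : ℝ) (f : E n → ℂ) : E n → ℂ :=
  fun x => Ifrac n α f x + Ifrac n β f x

/-- The Gaussian window `φ(t) = e^{-|t|²/2}`. -/
def gauss (n : ℕ) : E n → ℂ := fun t => ((Real.exp (-(‖t‖ ^ 2) / 2) : ℝ) : ℂ)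

/-- The short-time Fourier transform `V_w f (x,ξ) = ∫ f(t) conj(e^{iξ·t} w(t-x)) dt`. -/
def stft (n : ℕ) (w f : E n → ℂ) (x ξ : E n) : ℂ :=
  ∫ t : E n, f t * (starRingEnd ℂ) (Complex.exp (Complex.I * ((inner ℝ ξ t : ℝ) : ℂ)) * w (t - x))

/-- The modulation space norm with window `w`. -/
def MnormW (n : ℕ) (w : E n → ℂ) (p q : ℝ) (f : E n → ℂ) : ℝ≥0∞ :=
  (∫⁻ ξ : E n, (∫⁻ x : E n, ((‖stft n w f x ξ‖₊ : ℝ≥0∞)) ^ p) ^ (q / p)) ^ (1 / q)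

/-- The modulation space norm `‖f‖_{M^{p,q}}` (with Gaussian window). -/
def Mnorm (n : ℕ) (p q : ℝ) (f : E n → ℂ) : ℝ≥0∞ := MnormW n (gauss n) p q f

/-- The lattice point `k ∈ ℤⁿ ⊂ ℝⁿ`. -/
def latt (n : ℕ) (k : Fin n → ℤ) : E n := (WithLp.equiv 2 (Fin n → ℝ)).symm fun i => (k i : ℝ)

/-- The Fourier multiplier operator `m(D) f = 𝓕⁻¹[m 𝓕 f]`. -/
def fmul (n : ℕ) (m : E n → ℂ) (f : E n → ℂ) : E n → ℂ :=
  ftInv n fun ξ => m ξ * ft n f ξ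

/-- The modulation `M_k f(x) = e^{i k·x} f(x)`. -/
def modk (n : ℕ) (k : Fin n → ℤ) (f : E n → ℂ) : E n → ℂ :=
  fun x => Complex.exp (Complex.I * ((inner ℝ (latt n k) x : ℝ) : ℂ)) * f x

/-- The frequency-localization operator `φ(D-k) f = 𝓕⁻¹[φ(·-k) 𝓕 f]`. -/
def phiDk (n : ℕ) (φ : E n → ℝ) (k : Fin n → ℤ) (f : E n → ℂ) : E n → ℂ :=
  fmul n (fun ξ => ((φ (ξ - latt n k) : ℝ) : ℂ)) f

/-- The symbol `m_k^α(ξ) = |k|^α |ξ|^{-α} φ(ξ-k)`. -/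
def mka (n : ℕ) (α : ℝ) (φ : E n → ℝ) (k : Fin n → ℤ) (ξ : E n) : ℂ :=
  ((‖latt n k‖ ^ α * ‖ξ‖ ^ (-α) * φ (ξ - latt n k) : ℝ) : ℂ)


section AuxLemmas

variable {V W : Type*} [NormedAddCommGroup V] [NormedSpace ℝ V]
  [NormedAddCommGroup W] [NormedSpace ℝ W]

lemma my_fderiv_comp_add_right (f : V → W) (a x : V) :
    fderiv ℝ (fun y => f (y + a)) x = fderiv ℝ f (x + a) := by
  by_cases h : DifferentiableAt ℝ f (x + a)
  · have h1 : HasFDerivAt (fun y : V => y + a) (ContinuousLinearMap.id ℝ V) x :=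
      (hasFDerivAt_id x).add_const a
    have h2 := h.hasFDerivAt.comp x h1
    rw [ContinuousLinearMap.comp_id] at h2
    exact h2.fderiv
  · have h2 : ¬ DifferentiableAt ℝ (fun y => f (y + a)) x := by
      intro hd
      apply h
      have h3 : DifferentiableAt ℝ (fun z : V => z - a) (x + a) :=
        differentiableAt_id.sub_const a
      have h4 := DifferentiableAt.comp (𝕜 := ℝ) (x + a)
        (by simpa [add_sub_cancel_right] using hd) h3
      have h5 : ((fun y => f (y + a)) ∘ fun z : V => z - a) = f := by
        funext z; simp
      rwa [h5] at h4
    rw [fderiv_zero_of_not_differentiableAt h, fderiv_zero_of_not_differentiableAt h2]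

lemma my_iteratedFDeriv_comp_add_right (i : ℕ) (f : V → W) (a x : V) :
    iteratedFDeriv ℝ i (fun y => f (y + a)) x = iteratedFDeriv ℝ i f (x + a) := by
  induction i generalizing x with
  | zero => ext m; simp
  | succ i ih =>
    ext m
    rw [iteratedFDeriv_succ_apply_left, iteratedFDeriv_succ_apply_left]
    have hfe : (iteratedFDeriv ℝ i fun y => f (y + a)) =
        fun y => iteratedFDeriv ℝ i f (y + a) := funext fun y => ih y
    rw [hfe, my_fderiv_comp_add_right (iteratedFDeriv ℝ i f) a x]

lemma my_coord_le_norm {n : ℕ} (x : E n) (i : Fin n) : |x i| ≤ ‖x‖ := by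
  rw [EuclideanSpace.norm_eq, ← Real.sqrt_sq_eq_abs]
  apply Real.sqrt_le_sqrt
  have h1 : |x i| ^ 2 ≤ ∑ j, ‖x j‖ ^ 2 := by
    have := Finset.single_le_sum (f := fun j => ‖x j‖ ^ 2)
      (fun j _ => by positivity) (Finset.mem_univ i)
    simpa [Real.norm_eq_abs, sq_abs] using this
  simpa [sq_abs] using h1

lemma my_scaling_bound {n : ℕ} (α : ℝ) (i : ℕ) {y : E n} (hy : y ≠ 0) {S : ℝ} (hS0 : 0 ≤ S)
    (hS : ∀ u : E n, ‖u‖ = 1 → ‖iteratedFDeriv ℝ i (fun x : E n => ‖x‖ ^ (-α)) u‖ ≤ S) :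
    ‖iteratedFDeriv ℝ i (fun x : E n => ‖x‖ ^ (-α)) y‖ ≤ ‖y‖ ^ (-α) * ‖y‖⁻¹ ^ i * S := by
  set g : E n → ℝ := fun x => ‖x‖ ^ (-α) with hgdef
  have hc : (0 : ℝ) < ‖y‖ := norm_pos_iff.2 hy
  set c : ℝ := ‖y‖ with hcdef
  have hcne : c⁻¹ ≠ 0 := inv_ne_zero hc.ne'
  set e : E n ≃L[ℝ] E n :=
    (LinearEquiv.smulOfNeZero ℝ (E n) c⁻¹ hcne).toContinuousLinearEquiv with hedef
  have he : ∀ x : E n, e x = c⁻¹ • x := fun x => rfl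
  set s₀ : Set (E n) := {x | x ≠ 0} with hs₀def
  have hso : IsOpen s₀ := isOpen_compl_singleton
  have hg : ContDiffOn ℝ i g s₀ := by
    intro x hx
    exact ((contDiffAt_norm ℝ hx).rpow_const_of_ne (norm_ne_zero_iff.2 hx)).contDiffWithinAt
  set t : Set (E n) := (⇑e) ⁻¹' s₀ with htdef
  have ht : IsOpen t := hso.preimage e.continuous
  have hey : e y ∈ s₀ := by
    rw [he]; exact smul_ne_zero hcne hy
  have hyt : y ∈ t := hey
  have hmaps : Set.MapsTo (⇑e) t s₀ := fun x hx => hx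
  have hcomp : ContDiffOn ℝ i (g ∘ ⇑e) t := hg.comp (e.contDiff.contDiffOn) hmaps
  have hgid : Set.EqOn g ((c ^ (-α)) • (g ∘ ⇑e)) t := by
    intro x _
    simp only [Pi.smul_apply, Function.comp_apply, he, smul_eq_mul, hgdef]
    rw [norm_smul, norm_inv, Real.norm_eq_abs, abs_of_pos hc,
      Real.mul_rpow (inv_nonneg.2 hc.le) (norm_nonneg _), ← mul_assoc,
      ← Real.mul_rpow hc.le (inv_nonneg.2 hc.le), mul_inv_cancel₀ hc.ne', Real.one_rpow, one_mul]
  have step1 : iteratedFDeriv ℝ i g y = iteratedFDerivWithin ℝ i g t y :=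
    (iteratedFDerivWithin_of_isOpen i ht hyt).symm
  have step2 : iteratedFDerivWithin ℝ i g t y =
      iteratedFDerivWithin ℝ i ((c ^ (-α)) • (g ∘ ⇑e)) t y :=
    iteratedFDerivWithin_congr hgid hyt i
  have step3 : iteratedFDerivWithin ℝ i ((c ^ (-α)) • (g ∘ ⇑e)) t y =
      (c ^ (-α)) • iteratedFDerivWithin ℝ i (g ∘ ⇑e) t y :=
    iteratedFDerivWithin_const_smul_apply (hcomp y hyt) ht.uniqueDiffOn hyt
  have step4 : iteratedFDerivWithin ℝ i (g ∘ ⇑e) t y =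
      (iteratedFDerivWithin ℝ i g s₀ (e y)).compContinuousLinearMap
        (fun _ => (e : E n →L[ℝ] E n)) :=
    e.iteratedFDerivWithin_comp_right g hso.uniqueDiffOn hey i
  have step5 : iteratedFDerivWithin ℝ i g s₀ (e y) = iteratedFDeriv ℝ i g (e y) :=
    iteratedFDerivWithin_of_isOpen i hso hey
  have hnorme : ‖(e : E n →L[ℝ] E n)‖ ≤ c⁻¹ := by
    apply ContinuousLinearMap.opNorm_le_bound _ (inv_nonneg.2 hc.le)
    intro x
    have hh : (e : E n →L[ℝ] E n) x = c⁻¹ • x := rfl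
    rw [hh, norm_smul, norm_inv, Real.norm_eq_abs, abs_of_pos hc]
  have huey : ‖e y‖ = 1 := by
    rw [he, norm_smul, norm_inv, Real.norm_eq_abs, abs_of_pos hc, ← hcdef,
      inv_mul_cancel₀ hc.ne']
  calc ‖iteratedFDeriv ℝ i g y‖
      = ‖(c ^ (-α)) • ((iteratedFDeriv ℝ i g (e y)).compContinuousLinearMap
          (fun _ => (e : E n →L[ℝ] E n)))‖ := by
        rw [step1, step2, step3, step4, step5]
    _ = c ^ (-α) * ‖(iteratedFDeriv ℝ i g (e y)).compContinuousLinearMap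
          (fun _ => (e : E n →L[ℝ] E n))‖ := by
        rw [show ∀ T : ContinuousMultilinearMap ℝ (fun _ : Fin i => E n) ℝ,
            ‖(c ^ (-α)) • T‖ = ‖(c ^ (-α) : ℝ)‖ * ‖T‖ from fun T => norm_smul _ T,
          Real.norm_eq_abs, abs_of_pos (Real.rpow_pos_of_pos hc _)]
    _ ≤ c ^ (-α) * (‖iteratedFDeriv ℝ i g (e y)‖ * ∏ _j : Fin i, ‖(e : E n →L[ℝ] E n)‖) := by
        apply mul_le_mul_of_nonneg_left
          (ContinuousMultilinearMap.norm_compContinuousLinearMap_le _ _)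
          (Real.rpow_pos_of_pos hc _).le
    _ ≤ c ^ (-α) * (S * c⁻¹ ^ i) := by
        apply mul_le_mul_of_nonneg_left _ (Real.rpow_pos_of_pos hc _).le
        have h1 : ∏ _j : Fin i, ‖(e : E n →L[ℝ] E n)‖ ≤ c⁻¹ ^ i := by
          calc ∏ _j : Fin i, ‖(e : E n →L[ℝ] E n)‖ ≤ ∏ _j : Fin i, c⁻¹ :=
                Finset.prod_le_prod (fun _ _ => norm_nonneg _) (fun _ _ => hnorme)
            _ = c⁻¹ ^ i := by simp
        exact mul_le_mul (hS _ huey) h1 (Finset.prod_nonneg fun _ _ => norm_nonneg _) hS0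
    _ = c ^ (-α) * c⁻¹ ^ i * S := by ring

end AuxLemmas

set_option maxHeartbeats 1600000 in
/-- Mikhlin-type estimates for the translated symbols
`ξ ↦ |k|^α |ξ+k|^{-α} φ(ξ)`, uniformly in `k ≠ 0`. -/
theorem translated_symbol_mikhlin_estimate
    (n : ℕ) (hn : 0 < n) (α : ℝ)
    (φ : SchwartzMap (E n) ℝ)
    (hφs : ∀ ξ : E n, φ ξ ≠ 0 → ∀ i, |ξ i| ≤ 3 / 4) :
    ∃ C : ℝ, 0 < C ∧ ∀ k : Fin n → ℤ, k ≠ 0 → ∀ m : ℕ, m ≤ n / 2 + 1 →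
      ∀ v : Fin m → Fin n, ∀ ξ : E n, ξ ≠ 0 →
        ‖ξ‖ ^ m *
          ‖iteratedFDeriv ℝ m
              (fun η : E n => ‖latt n k‖ ^ α * ‖η + latt n k‖ ^ (-α) * φ η) ξ
              (fun j => EuclideanSpace.single (v j) (1 : ℝ))‖ ≤ C := by
  classical
  set M : ℕ := n / 2 + 1 with hMdef
  set g : E n → ℝ := fun x => ‖x‖ ^ (-α) with hgdef
  set s₀ : Set (E n) := {x : E n | x ≠ 0} with hs₀def
  have hso : IsOpen s₀ := isOpen_compl_singleton
  have hg : ∀ j : ℕ, ContDiffOn ℝ j g s₀ := fun j x hx =>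
    ((contDiffAt_norm ℝ hx).rpow_const_of_ne (norm_ne_zero_iff.2 hx)).contDiffWithinAt
  have hBg : ∀ j : ℕ, ∃ B : ℝ, 0 ≤ B ∧ ∀ u : E n, ‖u‖ = 1 →
      ‖iteratedFDeriv ℝ j g u‖ ≤ B := by
    intro j
    have hcont : ContinuousOn (iteratedFDeriv ℝ j g) s₀ := by
      have h1 := (hg j).continuousOn_iteratedFDerivWithin le_rfl hso.uniqueDiffOn
      exact h1.congr fun x hx => (iteratedFDerivWithin_of_isOpen j hso hx).symm
    have hsub : Metric.sphere (0 : E n) 1 ⊆ s₀ := by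
      intro u hu
      have h2 : ‖u‖ = 1 := by simpa using mem_sphere_zero_iff_norm.1 hu
      intro h0
      rw [h0] at h2; simp at h2
    obtain ⟨B, hB⟩ := (isCompact_sphere (0 : E n) 1).exists_bound_of_continuousOn
      (hcont.mono hsub)
    exact ⟨max B 0, le_max_right _ _, fun u hu =>
      le_trans (hB u (mem_sphere_zero_iff_norm.2 hu)) (le_max_left _ _)⟩
  choose Bg hBg0 hBgle using hBg
  have hBφ : ∀ j : ℕ, ∃ B : ℝ, 0 ≤ B ∧ ∀ x : E n, ‖iteratedFDeriv ℝ j (⇑φ) x‖ ≤ B := by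
    intro j
    obtain ⟨B, hB0, hB⟩ := φ.decay 0 j
    exact ⟨B, hB0.le, fun x => by simpa using hB x⟩
  choose Bφ hBφ0 hBφle using hBφ
  set b : ℝ := Real.sqrt n with hbdef
  have hb : 0 ≤ b := Real.sqrt_nonneg _
  set ρ : ℝ := 1 + 4 * b with hρdef
  have hρ0 : 0 < ρ := by linarith
  set Cρ : ℝ := max (ρ ^ α) (ρ⁻¹ ^ α) with hCρdef
  have hCρ0 : 0 < Cρ := lt_of_lt_of_le (Real.rpow_pos_of_pos hρ0 α) (le_max_left _ _)
  set Sg : ℝ := ∑ j ∈ Finset.range (M + 1), Bg j with hSgdef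
  have hSg0 : 0 ≤ Sg := Finset.sum_nonneg fun j _ => hBg0 j
  have hSgle : ∀ j, j ≤ M → Bg j ≤ Sg := fun j hj =>
    Finset.single_le_sum (fun l _ => hBg0 l) (Finset.mem_range.2 (Nat.lt_succ_of_le hj))
  set Pφ : ℝ := ∑ j ∈ Finset.range (M + 1), Bφ j with hPφdef
  have hPφ0 : 0 ≤ Pφ := Finset.sum_nonneg fun j _ => hBφ0 j
  have hPφle : ∀ j, j ≤ M → Bφ j ≤ Pφ := fun j hj =>
    Finset.single_le_sum (fun l _ => hBφ0 l) (Finset.mem_range.2 (Nat.lt_succ_of_le hj))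
  set A : ℝ := 2 ^ M * (Cρ * 4 ^ M * Sg) * Pφ with hAdef
  have hA0 : 0 ≤ A := by positivity
  refine ⟨(1 + b) ^ M * ((M + 1) * A) + 1, by positivity, ?_⟩
  intro k hk m hm v ξ hξ
  set F : E n → ℝ := fun η => ‖latt n k‖ ^ α * ‖η + latt n k‖ ^ (-α) * φ η with hFdef
  by_cases hξs : ξ ∈ tsupport (⇑φ)
  · -- main case : ξ in the support of φ
    have hcoord : ∀ i : Fin n, |ξ i| ≤ 3 / 4 := by
      have hclosed : IsClosed {x : E n | ∀ i, |x i| ≤ 3 / 4} := by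
        have hrw : {x : E n | ∀ i, |x i| ≤ 3 / 4} =
            ⋂ i, (fun x : E n => x i) ⁻¹' {t : ℝ | |t| ≤ 3 / 4} := by
          ext x; simp [Set.mem_iInter]
        rw [hrw]
        refine isClosed_iInter fun i => IsClosed.preimage ?_ ?_
        · exact (EuclideanSpace.proj (𝕜 := ℝ) i).continuous
        · exact isClosed_le (by continuity) continuous_const
      have hsub2 : tsupport (⇑φ) ⊆ {x : E n | ∀ i, |x i| ≤ 3 / 4} :=
        closure_minimal (fun x hx => hφs x hx) hclosed
      exact hsub2 hξs
    have hξb : ‖ξ‖ ≤ b := by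
      rw [EuclideanSpace.norm_eq]
      have h1 : ∑ i, ‖ξ i‖ ^ 2 ≤ (n : ℝ) := by
        calc ∑ i, ‖ξ i‖ ^ 2 ≤ ∑ _i : Fin n, (1 : ℝ) := by
              refine Finset.sum_le_sum fun i _ => ?_
              have h2 : ‖ξ i‖ ≤ 1 := by
                rw [Real.norm_eq_abs]; linarith [hcoord i]
              calc ‖ξ i‖ ^ 2 ≤ 1 ^ 2 := pow_le_pow_left₀ (norm_nonneg _) h2 2
                _ = 1 := one_pow 2
          _ = (n : ℝ) := by simp
      exact le_trans (Real.sqrt_le_sqrt h1) (le_of_eq rfl)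
    obtain ⟨i₀, hi₀'⟩ := Function.ne_iff.1 hk
    have hi₀ : k i₀ ≠ 0 := by simpa using hi₀'
    have hlatti : ∀ j : Fin n, latt n k j = (k j : ℝ) := fun j => rfl
    have hki : (1 : ℝ) ≤ |(k i₀ : ℝ)| := by
      have := Int.one_le_abs hi₀
      exact_mod_cast this
    have hK1 : (1 : ℝ) ≤ ‖latt n k‖ := by
      refine le_trans ?_ (my_coord_le_norm (latt n k) i₀)
      rw [hlatti]; exact hki
    have haddapply : (ξ + latt n k) i₀ = ξ i₀ + (k i₀ : ℝ) := rfl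
    have hc4 : (1 : ℝ) / 4 ≤ ‖ξ + latt n k‖ := by
      refine le_trans ?_ (my_coord_le_norm (ξ + latt n k) i₀)
      rw [haddapply]
      have h5 := abs_sub_abs_le_abs_sub ((k i₀ : ℝ)) (-(ξ i₀))
      rw [abs_neg, sub_neg_eq_add, add_comm] at h5
      have h6 := hcoord i₀
      linarith
    have hy : ξ + latt n k ≠ 0 := by
      intro h0
      rw [h0, norm_zero] at hc4; linarith
    have hc0 : (0 : ℝ) < ‖ξ + latt n k‖ := by linarith
    have hKpos : (0 : ℝ) < ‖latt n k‖ := by linarith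
    have hKc : ‖latt n k‖ ≤ ρ * ‖ξ + latt n k‖ := by
      have h6 : ‖latt n k‖ ≤ ‖ξ + latt n k‖ + b := by
        have h7 : ‖latt n k‖ = ‖(ξ + latt n k) - ξ‖ := by rw [add_sub_cancel_left]
        rw [h7]
        exact le_trans (norm_sub_le _ _) (by linarith)
      have h8 : b ≤ 4 * b * ‖ξ + latt n k‖ := by
        have p1 : 0 ≤ b * (‖ξ + latt n k‖ - 1 / 4) := mul_nonneg hb (by linarith)
        have p2 : b * (‖ξ + latt n k‖ - 1 / 4) = b * ‖ξ + latt n k‖ - b * (1 / 4) := by ring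
        have p4 : 4 * b * ‖ξ + latt n k‖ = 4 * (b * ‖ξ + latt n k‖) := by ring
        linarith
      have h9 : ρ * ‖ξ + latt n k‖ = ‖ξ + latt n k‖ + 4 * b * ‖ξ + latt n k‖ := by
        rw [hρdef]; ring
      linarith
    have hcK : ‖ξ + latt n k‖ ≤ ρ * ‖latt n k‖ := by
      have h7 : ‖ξ + latt n k‖ ≤ ‖latt n k‖ + b :=
        le_trans (norm_add_le _ _) (by linarith)
      have h8 : b ≤ 4 * b * ‖latt n k‖ := by
        have p1 : 0 ≤ b * (‖latt n k‖ - 1) := mul_nonneg hb (by linarith)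
        have p2 : b * (‖latt n k‖ - 1) = b * ‖latt n k‖ - b := by ring
        have p4 : 4 * b * ‖latt n k‖ = 4 * (b * ‖latt n k‖) := by ring
        linarith
      have h9 : ρ * ‖latt n k‖ = ‖latt n k‖ + 4 * b * ‖latt n k‖ := by
        rw [hρdef]; ring
      linarith
    have hRatio : ‖latt n k‖ ^ α * ‖ξ + latt n k‖ ^ (-α) ≤ Cρ := by
      have hdiv : ‖latt n k‖ ^ α * ‖ξ + latt n k‖ ^ (-α)
          = (‖latt n k‖ / ‖ξ + latt n k‖) ^ α := by
        rw [Real.rpow_neg hc0.le, Real.div_rpow hKpos.le hc0.le, div_eq_mul_inv]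
      rw [hdiv]
      have hlow : ρ⁻¹ ≤ ‖latt n k‖ / ‖ξ + latt n k‖ := by
        rw [le_div_iff₀ hc0]
        have h8 := mul_le_mul_of_nonneg_left hcK (inv_nonneg.2 hρ0.le)
        rw [inv_mul_cancel_left₀ hρ0.ne'] at h8
        linarith
      have hhigh : ‖latt n k‖ / ‖ξ + latt n k‖ ≤ ρ := (div_le_iff₀ hc0).2 (by linarith)
      rcases le_or_gt 0 α with hα | hα
      · exact le_trans (Real.rpow_le_rpow (by positivity) hhigh hα) (le_max_left _ _)
      · exact le_trans (Real.rpow_le_rpow_of_nonpos (by positivity) hlow hα.le)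
          (le_max_right _ _)
    set s : Set (E n) := {η : E n | η + latt n k ≠ 0} with hsdef
    have hs : IsOpen s := by
      have hrw : s = (fun η : E n => η + latt n k) ⁻¹' {(0 : E n)}ᶜ := by
        ext η
        simp only [hsdef, Set.mem_setOf_eq, Set.mem_preimage, Set.mem_compl_iff,
          Set.mem_singleton_iff]
      rw [hrw]
      exact isOpen_compl_singleton.preimage (continuous_id.add continuous_const)
    have hξmem : ξ ∈ s := hy
    have hmapsto : Set.MapsTo (fun η : E n => η + latt n k) s s₀ := fun η hη => hη
    have hgcomp : ∀ j : ℕ, ContDiffOn ℝ j (fun η : E n => g (η + latt n k)) s :=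
      fun j => (hg j).comp ((contDiff_id.add contDiff_const).contDiffOn) hmapsto
    have hf₁ : ContDiffOn ℝ m (fun η : E n => ‖latt n k‖ ^ α * ‖η + latt n k‖ ^ (-α)) s :=
      contDiffOn_const.mul (hgcomp m)
    have hf₂ : ContDiffOn ℝ m (⇑φ) s := (φ.smooth m).contDiffOn
    have hmain : ‖iteratedFDerivWithin ℝ m F s ξ‖ ≤ (M + 1) * A := by
      have hLeib := norm_iteratedFDerivWithin_mul_le (𝕜 := ℝ)
        hf₁ hf₂ hs.uniqueDiffOn hξmem (le_refl (m : WithTop ℕ∞))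
      refine le_trans hLeib ?_
      have hterm : ∀ i ∈ Finset.range (m + 1), (m.choose i : ℝ) *
          ‖iteratedFDerivWithin ℝ i
            (fun η : E n => ‖latt n k‖ ^ α * ‖η + latt n k‖ ^ (-α)) s ξ‖ *
          ‖iteratedFDerivWithin ℝ (m - i) (⇑φ) s ξ‖ ≤ A := by
        intro i hi
        have him : i ≤ m := Nat.lt_succ_iff.1 (Finset.mem_range.1 hi)
        have hiM : i ≤ M := le_trans him hm
        have hb1 : ‖iteratedFDerivWithin ℝ i
            (fun η : E n => ‖latt n k‖ ^ α * ‖η + latt n k‖ ^ (-α)) s ξ‖ ≤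
            Cρ * 4 ^ M * Sg := by
          have hEq : Set.EqOn (fun η : E n => ‖latt n k‖ ^ α * ‖η + latt n k‖ ^ (-α))
              ((‖latt n k‖ ^ α) • fun η : E n => g (η + latt n k)) s := fun x _ => rfl
          have e1 : iteratedFDerivWithin ℝ i
              (fun η : E n => ‖latt n k‖ ^ α * ‖η + latt n k‖ ^ (-α)) s ξ =
              (‖latt n k‖ ^ α) •
                iteratedFDerivWithin ℝ i (fun η : E n => g (η + latt n k)) s ξ := by
            rw [iteratedFDerivWithin_congr hEq hξmem i]
            exact iteratedFDerivWithin_const_smul_apply (hgcomp i ξ hξmem) hs.uniqueDiffOn hξmem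
          have e2 : iteratedFDerivWithin ℝ i (fun η : E n => g (η + latt n k)) s ξ =
              iteratedFDeriv ℝ i g (ξ + latt n k) := by
            rw [iteratedFDerivWithin_of_isOpen i hs hξmem]
            exact my_iteratedFDeriv_comp_add_right i g (latt n k) ξ
          rw [e1, e2]
          have e3 : ‖(‖latt n k‖ ^ α) • iteratedFDeriv ℝ i g (ξ + latt n k)‖ =
              ‖latt n k‖ ^ α * ‖iteratedFDeriv ℝ i g (ξ + latt n k)‖ := by
            rw [norm_smul, Real.norm_eq_abs, abs_of_pos (Real.rpow_pos_of_pos hKpos α)]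
          rw [e3]
          have e4 := my_scaling_bound α i hy (hBg0 i) (hBgle i)
          calc ‖latt n k‖ ^ α * ‖iteratedFDeriv ℝ i g (ξ + latt n k)‖
              ≤ ‖latt n k‖ ^ α *
                (‖ξ + latt n k‖ ^ (-α) * ‖ξ + latt n k‖⁻¹ ^ i * Bg i) :=
                mul_le_mul_of_nonneg_left e4 (Real.rpow_pos_of_pos hKpos α).le
            _ = (‖latt n k‖ ^ α * ‖ξ + latt n k‖ ^ (-α)) *
                ‖ξ + latt n k‖⁻¹ ^ i * Bg i := by ring
            _ ≤ Cρ * 4 ^ M * Sg := by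
                have hcinv : (0 : ℝ) < ‖ξ + latt n k‖⁻¹ := inv_pos.2 hc0
                have hcc : ‖ξ + latt n k‖⁻¹ * ‖ξ + latt n k‖ = 1 :=
                  inv_mul_cancel₀ hc0.ne'
                have h10 : ‖ξ + latt n k‖⁻¹ ≤ 4 := by nlinarith
                have h11 : ‖ξ + latt n k‖⁻¹ ^ i ≤ 4 ^ M := by
                  calc ‖ξ + latt n k‖⁻¹ ^ i ≤ 4 ^ i := pow_le_pow_left₀ hcinv.le h10 i
                    _ ≤ (4 : ℝ) ^ M := pow_le_pow_right₀ (by norm_num) hiM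
                exact mul_le_mul
                  (mul_le_mul hRatio h11 (by positivity) hCρ0.le)
                  (hSgle i hiM) (hBg0 i) (by positivity)
        have hb2 : ‖iteratedFDerivWithin ℝ (m - i) (⇑φ) s ξ‖ ≤ Pφ := by
          rw [iteratedFDerivWithin_of_isOpen _ hs hξmem]
          exact le_trans (hBφle (m - i) ξ)
            (hPφle _ (le_trans (Nat.sub_le m i) hm))
        have hchoose : (m.choose i : ℝ) ≤ 2 ^ M := by
          have h12 : m.choose i ≤ 2 ^ m := by
            calc m.choose i ≤ ∑ j ∈ Finset.range (m + 1), m.choose j :=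
                  Finset.single_le_sum (fun j _ => Nat.zero_le _) hi
              _ = 2 ^ m := Nat.sum_range_choose m
          calc (m.choose i : ℝ) ≤ (2 : ℝ) ^ m := by exact_mod_cast h12
            _ ≤ 2 ^ M := pow_le_pow_right₀ one_le_two hm
        calc (m.choose i : ℝ) *
            ‖iteratedFDerivWithin ℝ i
              (fun η : E n => ‖latt n k‖ ^ α * ‖η + latt n k‖ ^ (-α)) s ξ‖ *
            ‖iteratedFDerivWithin ℝ (m - i) (⇑φ) s ξ‖
            ≤ 2 ^ M * (Cρ * 4 ^ M * Sg) * Pφ :=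
              mul_le_mul
                (mul_le_mul hchoose hb1 (norm_nonneg _) (by positivity))
                hb2 (norm_nonneg _) (by positivity)
          _ = A := rfl
      calc (∑ i ∈ Finset.range (m + 1), (m.choose i : ℝ) *
            ‖iteratedFDerivWithin ℝ i
              (fun η : E n => ‖latt n k‖ ^ α * ‖η + latt n k‖ ^ (-α)) s ξ‖ *
            ‖iteratedFDerivWithin ℝ (m - i) (⇑φ) s ξ‖)
          ≤ ∑ _i ∈ Finset.range (m + 1), A := Finset.sum_le_sum hterm
        _ = (m + 1) * A := by
            rw [Finset.sum_const, Finset.card_range, nsmul_eq_mul]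
            push_cast; ring
        _ ≤ (M + 1) * A := by
            have h13 : (m : ℝ) + 1 ≤ (M : ℝ) + 1 := by exact_mod_cast Nat.succ_le_succ hm
            exact mul_le_mul_of_nonneg_right h13 hA0
    have hfull : iteratedFDeriv ℝ m F ξ = iteratedFDerivWithin ℝ m F s ξ :=
      (iteratedFDerivWithin_of_isOpen m hs hξmem).symm
    have hTv : ‖iteratedFDeriv ℝ m F ξ (fun j => EuclideanSpace.single (v j) (1 : ℝ))‖ ≤
        ‖iteratedFDeriv ℝ m F ξ‖ := by
      have h9 := (iteratedFDeriv ℝ m F ξ).le_opNorm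
        (fun j => EuclideanSpace.single (v j) (1 : ℝ))
      simpa [EuclideanSpace.norm_single] using h9
    have hξm : ‖ξ‖ ^ m ≤ (1 + b) ^ M := by
      calc ‖ξ‖ ^ m ≤ (1 + b) ^ m := pow_le_pow_left₀ (norm_nonneg _) (by linarith) m
        _ ≤ (1 + b) ^ M := pow_le_pow_right₀ (by linarith) hm
    have hfinal : ‖ξ‖ ^ m *
        ‖iteratedFDeriv ℝ m F ξ (fun j => EuclideanSpace.single (v j) (1 : ℝ))‖ ≤
        (1 + b) ^ M * ((M + 1) * A) := by
      apply mul_le_mul hξm _ (norm_nonneg _) (by positivity)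
      refine le_trans hTv ?_
      rw [hfull]; exact hmain
    linarith
  · -- ξ outside the support of φ
    have hU : IsOpen (tsupport (⇑φ))ᶜ := (isClosed_tsupport _).isOpen_compl
    have hEq : Set.EqOn F (fun _ => (0 : ℝ)) (tsupport (⇑φ))ᶜ := fun x hx => by
      simp [hFdef, image_eq_zero_of_notMem_tsupport hx]
    have hzero : iteratedFDeriv ℝ m F ξ = 0 := by
      calc iteratedFDeriv ℝ m F ξ = iteratedFDerivWithin ℝ m F (tsupport (⇑φ))ᶜ ξ :=
            (iteratedFDerivWithin_of_isOpen m hU hξs).symm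
        _ = iteratedFDerivWithin ℝ m (fun _ => (0 : ℝ)) (tsupport (⇑φ))ᶜ ξ :=
            iteratedFDerivWithin_congr hEq hξs m
        _ = iteratedFDeriv ℝ m (fun _ => (0 : ℝ)) ξ :=
            iteratedFDerivWithin_of_isOpen m hU hξs
        _ = 0 := by rw [iteratedFDeriv_zero_fun]; rfl
    rw [hzero]
    simp only [ContinuousMultilinearMap.zero_apply, norm_zero, mul_zero]
    positivity
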